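/- arXiv:2605.30964 — 2 statements merged into one kernel-verified Lean document; each statement's English description precedes it below -/
import Mathlib

section
/- Let (Ω, ℙ) be a probability space, σ : Ω → Ω an ergodic measure-preserving transformation, φ ∈ L¹(ℙ) a nonnegative function, and (Λ_N) a sequence of positive reals with Λ_N → ∞. Then for ℙ-almost every ω, (1/N) · Σ_{n=0}^{N-1} φ(σⁿω) · 1_{φ(σⁿω) > Λ_N} → 0 as N → ∞. -/
open MeasureTheory Filter Topology

section Maximal

variable {Ω : Type*} [MeasurableSpace Ω] (σ : Ω → Ω) (g : Ω → ℝ)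

/-- Running maximum of Birkhoff sums: `maxS σ g N ω = max_{0 ≤ n ≤ N} S_n g ω`. -/
noncomputable def maxS : ℕ → Ω → ℝ
  | 0 => 0
  | (N + 1) => fun ω => max (maxS N ω) (birkhoffSum σ g (N + 1) ω)

variable {σ g}

lemma maxS_nonneg : ∀ N ω, 0 ≤ maxS σ g N ω
  | 0, ω => le_refl 0
  | (N + 1), ω => le_trans (maxS_nonneg N ω) (le_max_left _ _)

lemma le_maxS : ∀ N, ∀ n ≤ N, ∀ ω, birkhoffSum σ g n ω ≤ maxS σ g N ω
  | 0, n, hn, ω => by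
      interval_cases n
      simp [birkhoffSum_zero, maxS]
  | (N + 1), n, hn, ω => by
      rcases Nat.lt_succ_iff_lt_or_eq.mp (Nat.lt_succ_of_le hn) with h | h
      · exact le_trans (le_maxS N n (Nat.lt_succ_iff.mp h) ω) (le_max_left _ _)
      · rw [h]; exact le_max_right _ _

lemma maxS_le : ∀ N {X : ℝ} {ω}, (∀ n ≤ N, birkhoffSum σ g n ω ≤ X) → maxS σ g N ω ≤ X
  | 0, X, ω, h => by simpa [birkhoffSum_zero, maxS] using h 0 le_rfl
  | (N + 1), X, ω, h =>
      max_le (maxS_le N fun n hn => h n (hn.trans (Nat.le_succ N))) (h (N + 1) le_rfl)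

lemma maxS_mono_succ (N : ℕ) (ω : Ω) : maxS σ g N ω ≤ maxS σ g (N + 1) ω :=
  le_max_left _ _

lemma maxS_succ_le (N : ℕ) (ω : Ω) :
    maxS σ g (N + 1) ω ≤ max 0 (g ω + maxS σ g N (σ ω)) := by
  refine maxS_le (N + 1) fun n hn => ?_
  cases n with
  | zero => simp [birkhoffSum_zero]
  | succ m =>
      rw [birkhoffSum_succ']
      refine le_trans ?_ (le_max_right _ _)
      exact add_le_add le_rfl (le_maxS N m (Nat.succ_le_succ_iff.mp hn) (σ ω))

lemma measurable_birkhoffSum (hσ : Measurable σ) (hg : Measurable g) (n : ℕ) :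
    Measurable (birkhoffSum σ g n) := by
  apply Finset.measurable_sum
  intro k _
  exact hg.comp (hσ.iterate k)

lemma measurable_maxS (hσ : Measurable σ) (hg : Measurable g) :
    ∀ N, Measurable (maxS σ g N)
  | 0 => measurable_const
  | (N + 1) => (measurable_maxS hσ hg N).max (measurable_birkhoffSum hσ hg (N + 1))

variable (ℙ : Measure Ω) [IsProbabilityMeasure ℙ]

lemma integrable_birkhoffSum (hσ : MeasurePreserving σ ℙ ℙ) (hg : Integrable g ℙ) (n : ℕ) :
    Integrable (birkhoffSum σ g n) ℙ := by
  have : ∀ k : ℕ, Integrable (fun ω => g (σ^[k] ω)) ℙ := fun k =>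
    ((hσ.iterate k).integrable_comp hg.1).mpr hg
  exact integrable_finset_sum _ fun k _ => this k

lemma integrable_maxS (hσ : MeasurePreserving σ ℙ ℙ) (hg : Integrable g ℙ) :
    ∀ N, Integrable (maxS σ g N) ℙ
  | 0 => integrable_const 0
  | (N + 1) => (integrable_maxS hσ hg N).sup (integrable_birkhoffSum ℙ hσ hg (N + 1))

/-- Garsia's maximal ergodic lemma: the integral of `g` over the set where some
Birkhoff sum is positive (up to time `N+1`) is nonnegative. -/
lemma maximal_ergodic (hσ : MeasurePreserving σ ℙ ℙ) (hgm : Measurable g)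
    (hg : Integrable g ℙ) (N : ℕ) :
    0 ≤ ∫ ω in {ω | 0 < maxS σ g (N + 1) ω}, g ω ∂ℙ := by
  set A : Set Ω := {ω | 0 < maxS σ g (N + 1) ω} with hA
  have hAm : MeasurableSet A := measurableSet_lt measurable_const (measurable_maxS hσ.measurable hgm (N + 1))
  have hMN1 : Integrable (maxS σ g (N + 1)) ℙ := integrable_maxS ℙ hσ hg (N + 1)
  have hMNσ : Integrable (fun ω => maxS σ g N (σ ω)) ℙ :=
    (hσ.integrable_comp (integrable_maxS ℙ hσ hg N).1).mpr (integrable_maxS ℙ hσ hg N)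
  -- pointwise bound on A
  have key : ∀ ω ∈ A, maxS σ g (N + 1) ω - maxS σ g N (σ ω) ≤ g ω := by
    intro ω hω
    have h1 : maxS σ g (N + 1) ω ≤ max 0 (g ω + maxS σ g N (σ ω)) := maxS_succ_le N ω
    have h2 : (0 : ℝ) < maxS σ g (N + 1) ω := hω
    have h3 : maxS σ g (N + 1) ω ≤ g ω + maxS σ g N (σ ω) := by
      rcases max_cases 0 (g ω + maxS σ g N (σ ω)) with ⟨he, _⟩ | ⟨he, _⟩
      · rw [he] at h1; linarith
      · rwa [he] at h1
    linarith
  have step1 : ∫ ω in A, (maxS σ g (N + 1) ω - maxS σ g N (σ ω)) ∂ℙ ≤ ∫ ω in A, g ω ∂ℙ :=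
    setIntegral_mono_on (hMN1.sub hMNσ).integrableOn hg.integrableOn hAm key
  have step2 : ∫ ω in A, (maxS σ g (N + 1) ω - maxS σ g N (σ ω)) ∂ℙ
      = ∫ ω in A, maxS σ g (N + 1) ω ∂ℙ - ∫ ω in A, maxS σ g N (σ ω) ∂ℙ :=
    integral_sub hMN1.integrableOn hMNσ.integrableOn
  have step3 : ∫ ω in A, maxS σ g (N + 1) ω ∂ℙ = ∫ ω, maxS σ g (N + 1) ω ∂ℙ := by
    rw [← integral_add_compl hAm hMN1]
    have : ∫ ω in Aᶜ, maxS σ g (N + 1) ω ∂ℙ = 0 := by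
      apply setIntegral_eq_zero_of_forall_eq_zero
      intro ω hω
      have : ¬ (0 < maxS σ g (N + 1) ω) := hω
      exact le_antisymm (not_lt.mp this) (maxS_nonneg (N + 1) ω)
    rw [this, add_zero]
  have step4 : ∫ ω in A, maxS σ g N (σ ω) ∂ℙ ≤ ∫ ω, maxS σ g N (σ ω) ∂ℙ :=
    setIntegral_le_integral hMNσ (Eventually.of_forall fun ω => maxS_nonneg N (σ ω))
  have step5 : ∫ ω, maxS σ g N (σ ω) ∂ℙ = ∫ ω, maxS σ g N ω ∂ℙ := by
    rw [← integral_map hσ.measurable.aemeasurable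
      (measurable_maxS hσ.measurable hgm N).aestronglyMeasurable, hσ.map_eq]
  have step6 : ∫ ω, maxS σ g N ω ∂ℙ ≤ ∫ ω, maxS σ g (N + 1) ω ∂ℙ :=
    integral_mono (integrable_maxS ℙ hσ hg N) hMN1 fun ω => maxS_mono_succ N ω
  linarith

/-- Maximal ergodic inequality for a nonnegative integrable `ψ`. -/
lemma maximal_inequality (hσ : MeasurePreserving σ ℙ ℙ) {ψ : Ω → ℝ} (hψm : Measurable ψ)
    (hψ : Integrable ψ ℙ) (hψ0 : ∀ ω, 0 ≤ ψ ω) {ε : ℝ} (hε : 0 < ε) :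
    ℙ {ω | ∃ n, 1 ≤ n ∧ ε * n < birkhoffSum σ ψ n ω}
      ≤ ENNReal.ofReal ((∫ ω, ψ ω ∂ℙ) / ε) := by
  set g : Ω → ℝ := fun ω => ψ ω - ε with hgdef
  have hgm : Measurable g := hψm.sub measurable_const
  have hg : Integrable g ℙ := hψ.sub (integrable_const ε)
  have hSg : ∀ n ω, birkhoffSum σ g n ω = birkhoffSum σ ψ n ω - n * ε := by
    intro n ω
    simp only [hgdef, birkhoffSum, Finset.sum_sub_distrib, Finset.sum_const,
      Finset.card_range, nsmul_eq_mul]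
  set A : ℕ → Set Ω := fun N => {ω | 0 < maxS σ g (N + 1) ω} with hAdef
  have hAm : ∀ N, MeasurableSet (A N) := fun N =>
    measurableSet_lt measurable_const (measurable_maxS hσ.measurable hgm (N + 1))
  have hAmono : Monotone A := by
    intro M N hMN ω hω
    have : maxS σ g (M + 1) ω ≤ maxS σ g (N + 1) ω := by
      clear hω
      induction hMN with
      | refl => rfl
      | step _ ih => exact le_trans ih (maxS_mono_succ _ _)
    exact lt_of_lt_of_le hω this
  -- the target set equals the union of the A N
  have hUnion : {ω | ∃ n, 1 ≤ n ∧ ε * n < birkhoffSum σ ψ n ω} = ⋃ N, A N := by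
    ext ω
    simp only [Set.mem_setOf_eq, Set.mem_iUnion, hAdef]
    constructor
    · rintro ⟨n, hn1, hn⟩
      obtain ⟨m, rfl⟩ := Nat.exists_eq_add_of_le hn1
      refine ⟨m, lt_of_lt_of_le ?_ (le_maxS (m + 1) (1 + m) (by omega) ω)⟩
      rw [hSg]
      have : (↑(1 + m) : ℝ) * ε = ε * ↑(1 + m) := mul_comm _ _
      linarith [hn, this.le]
    · rintro ⟨N, hN⟩
      by_contra h
      push_neg at h
      have : maxS σ g (N + 1) ω ≤ 0 := by
        apply maxS_le
        intro n hn
        rcases Nat.eq_zero_or_pos n with rfl | hn1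
        · simp [birkhoffSum_zero]
        · rw [hSg]
          have h2 : birkhoffSum σ ψ n ω ≤ ε * n := h n hn1
          have h3 : ε * (n : ℝ) = (n : ℝ) * ε := mul_comm _ _
          linarith
      exact absurd hN (not_lt.mpr this)
  -- bound the measure of each A N
  have hbound : ∀ N, ℙ (A N) ≤ ENNReal.ofReal ((∫ ω, ψ ω ∂ℙ) / ε) := by
    intro N
    have h0 : 0 ≤ ∫ ω in A N, g ω ∂ℙ := maximal_ergodic ℙ hσ hgm hg N
    have h1 : ∫ ω in A N, g ω ∂ℙ
        = ∫ ω in A N, ψ ω ∂ℙ - (ℙ (A N)).toReal * ε := by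
      rw [hgdef]
      rw [integral_sub hψ.integrableOn (integrable_const ε).integrableOn]
      rw [setIntegral_const, smul_eq_mul, measureReal_def]
    have h2 : ∫ ω in A N, ψ ω ∂ℙ ≤ ∫ ω, ψ ω ∂ℙ :=
      setIntegral_le_integral hψ (Eventually.of_forall hψ0)
    have h3 : (ℙ (A N)).toReal ≤ (∫ ω, ψ ω ∂ℙ) / ε := by
      rw [le_div_iff₀ hε]
      linarith
    rw [← ENNReal.ofReal_toReal (measure_ne_top ℙ (A N))]
    exact ENNReal.ofReal_le_ofReal h3
  rw [hUnion]
  calc ℙ (⋃ N, A N) = ⨆ N, ℙ (A N) := by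
        exact (Monotone.directed_le hAmono).measure_iUnion
    _ ≤ ENNReal.ofReal ((∫ ω, ψ ω ∂ℙ) / ε) := iSup_le hbound

end Maximal

/-- For an ergodic measure-preserving `σ`, a nonnegative integrable `φ` and thresholds
`Λ N → ∞`, the truncated Birkhoff averages of the part of `φ` above `Λ N` tend to `0`
almost surely. -/
theorem stmt0 {Ω : Type*} [MeasurableSpace Ω] (ℙ : Measure Ω) [IsProbabilityMeasure ℙ]
    (σ : Ω → Ω) (hσ : Ergodic σ ℙ)
    (φ : Ω → ℝ) (hφ0 : ∀ ω, 0 ≤ φ ω) (hφ : Integrable φ ℙ)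
    (Λ : ℕ → ℝ) (hΛpos : ∀ N, 0 < Λ N) (hΛ : Tendsto Λ atTop atTop) :
    ∀ᵐ ω ∂ℙ, Tendsto (fun N : ℕ =>
        (1 / (N : ℝ)) * ∑ n ∈ Finset.range N,
          (if Λ N < φ (σ^[n] ω) then φ (σ^[n] ω) else 0))
      atTop (𝓝 0) := by
  have hmp : MeasurePreserving σ ℙ ℙ := hσ.toMeasurePreserving
  -- a measurable nonnegative representative of φ
  set φ' : Ω → ℝ := fun ω => max (hφ.1.mk φ ω) 0 with hφ'def
  have hφ'm : Measurable φ' := hφ.1.measurable_mk.max measurable_const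
  have hφ'eq : φ =ᵐ[ℙ] φ' := by
    filter_upwards [hφ.1.ae_eq_mk] with ω hω
    rw [hφ'def]
    simp only [← hω]
    exact (max_eq_left (hφ0 ω)).symm
  have hφ'0 : ∀ ω, 0 ≤ φ' ω := fun ω => le_max_right _ _
  have hφ' : Integrable φ' ℙ := hφ.congr hφ'eq
  -- truncations
  set ψ : ℕ → Ω → ℝ := fun M ω => if (M : ℝ) < φ' ω then φ' ω else 0 with hψdef
  have hψm : ∀ M, Measurable (ψ M) := fun M =>
    Measurable.ite (measurableSet_lt measurable_const hφ'm) hφ'm measurable_const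
  have hψ0 : ∀ M ω, 0 ≤ ψ M ω := by
    intro M ω; rw [hψdef]; dsimp only
    split_ifs with h
    · exact hφ'0 ω
    · rfl
  have hψle : ∀ M ω, ψ M ω ≤ φ' ω := by
    intro M ω; rw [hψdef]; dsimp only
    split_ifs with h
    · rfl
    · exact hφ'0 ω
  have hψint : ∀ M, Integrable (ψ M) ℙ := by
    intro M
    refine hφ'.mono ((hψm M).aestronglyMeasurable) ?_
    filter_upwards with ω
    rw [Real.norm_eq_abs, Real.norm_eq_abs, abs_of_nonneg (hψ0 M ω),
      abs_of_nonneg (hφ'0 ω)]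
    exact hψle M ω
  -- the integrals of the truncations tend to 0
  have hψtendsto : Tendsto (fun M => ∫ ω, ψ M ω ∂ℙ) atTop (𝓝 0) := by
    have := tendsto_integral_of_dominated_convergence (μ := ℙ) (F := fun M ω => ψ M ω)
      (f := fun _ => (0 : ℝ)) (bound := φ')
      (fun M => (hψm M).aestronglyMeasurable) hφ'
      (fun M => Eventually.of_forall fun ω => by
        rw [Real.norm_eq_abs, abs_of_nonneg (hψ0 M ω)]; exact hψle M ω)
      (Eventually.of_forall fun ω => ?_)
    · simpa using this
    · -- pointwise: ψ M ω → 0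
      have : ∀ᶠ M : ℕ in atTop, ψ M ω = 0 := by
        obtain ⟨M₀, hM₀⟩ := exists_nat_ge (φ' ω)
        filter_upwards [eventually_ge_atTop M₀] with M hM
        rw [hψdef]; dsimp only
        rw [if_neg]
        push_neg
        exact hM₀.trans (by exact_mod_cast hM)
      exact Tendsto.congr' (by filter_upwards [this] with M hM; rw [hM]) tendsto_const_nhds
  -- bad sets
  set B : ℕ → ℕ → Set Ω := fun j M =>
    {ω | ∃ n, 1 ≤ n ∧ (1 / (j + 1 : ℝ)) * n < birkhoffSum σ (ψ M) n ω} with hBdef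
  have hBbound : ∀ j M, ℙ (B j M)
      ≤ ENNReal.ofReal ((∫ ω, ψ M ω ∂ℙ) / (1 / (j + 1 : ℝ))) := by
    intro j M
    exact maximal_inequality ℙ hmp (hψm M) (hψint M) (hψ0 M)
      (by positivity)
  have hBnull : ∀ j, ℙ (⋂ M, B j M) = 0 := by
    intro j
    refine le_antisymm ?_ (zero_le)
    have h1 : Tendsto (fun M => ENNReal.ofReal ((∫ ω, ψ M ω ∂ℙ) / (1 / (j + 1 : ℝ))))
        atTop (𝓝 0) := by
      have : Tendsto (fun M => (∫ ω, ψ M ω ∂ℙ) / (1 / (j + 1 : ℝ))) atTop (𝓝 0) := by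
        simpa using hψtendsto.div_const (1 / (j + 1 : ℝ))
      simpa [Function.comp_def] using (ENNReal.continuous_ofReal.tendsto 0).comp this
    refine ge_of_tendsto h1 ?_
    filter_upwards with M
    exact le_trans (measure_mono (Set.iInter_subset _ M)) (hBbound j M)
  -- the orbit equality set
  have horb : ∀ᵐ ω ∂ℙ, ∀ n : ℕ, φ (σ^[n] ω) = φ' (σ^[n] ω) := by
    rw [ae_all_iff]
    intro n
    exact (hmp.iterate n).quasiMeasurePreserving.ae_eq_comp hφ'eq
  -- assemble the almost-everywhere statement
  have hgood : ∀ᵐ ω ∂ℙ, (∀ n : ℕ, φ (σ^[n] ω) = φ' (σ^[n] ω)) ∧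
      ∀ j : ℕ, ∃ M : ℕ, ∀ n, 1 ≤ n → birkhoffSum σ (ψ M) n ω ≤ (1 / (j + 1 : ℝ)) * n := by
    refine horb.and ?_
    rw [ae_all_iff]
    intro j
    have : ∀ᵐ ω ∂ℙ, ω ∉ ⋂ M, B j M :=
      measure_eq_zero_iff_ae_notMem.mp (hBnull j)
    filter_upwards [this] with ω hω
    rw [Set.mem_iInter] at hω
    push_neg at hω
    obtain ⟨M, hM⟩ := hω
    refine ⟨M, fun n hn => ?_⟩
    by_contra hcon
    exact hM ⟨n, hn, not_le.mp hcon⟩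
  filter_upwards [hgood] with ω hω
  obtain ⟨hω1, hω2⟩ := hω
  rw [NormedAddCommGroup.tendsto_nhds_zero]
  intro ε hε
  obtain ⟨j, hj⟩ := exists_nat_one_div_lt hε
  obtain ⟨M, hM⟩ := hω2 j
  have hev : ∀ᶠ N : ℕ in atTop, (M : ℝ) ≤ Λ N := (hΛ.eventually_ge_atTop (M : ℝ))
  filter_upwards [hev, eventually_ge_atTop 1] with N hN1 hN2
  set q : ℝ := (1 / (N : ℝ)) * ∑ n ∈ Finset.range N,
      (if Λ N < φ (σ^[n] ω) then φ (σ^[n] ω) else 0) with hq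
  have hNpos : (0 : ℝ) < N := by exact_mod_cast hN2
  have hterm : ∀ n ∈ Finset.range N,
      (if Λ N < φ (σ^[n] ω) then φ (σ^[n] ω) else 0) ≤ ψ M (σ^[n] ω) := by
    intro n _
    rw [hω1 n]
    split_ifs with h
    · rw [hψdef]; dsimp only
      rw [if_pos (lt_of_le_of_lt hN1 h)]
    · exact hψ0 M _
  have hsum : ∑ n ∈ Finset.range N, (if Λ N < φ (σ^[n] ω) then φ (σ^[n] ω) else 0)
      ≤ birkhoffSum σ (ψ M) N ω := Finset.sum_le_sum hterm
  have hbs : birkhoffSum σ (ψ M) N ω ≤ (1 / (j + 1 : ℝ)) * N := hM N hN2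
  have hq0 : 0 ≤ q := by
    rw [hq]
    apply mul_nonneg (by positivity)
    apply Finset.sum_nonneg
    intro n _
    split_ifs with h
    · exact hφ0 _
    · exact le_rfl
  have hqle : q ≤ 1 / (j + 1 : ℝ) := by
    rw [hq]
    calc (1 / (N : ℝ)) * ∑ n ∈ Finset.range N,
          (if Λ N < φ (σ^[n] ω) then φ (σ^[n] ω) else 0)
        ≤ (1 / (N : ℝ)) * ((1 / (j + 1 : ℝ)) * N) := by
          apply mul_le_mul_of_nonneg_left (hsum.trans hbs) (by positivity)
      _ = 1 / (j + 1 : ℝ) := by field_simp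
  rw [Real.norm_eq_abs, abs_of_nonneg hq0]
  exact lt_of_le_of_lt hqle hj
end

section
/- Let (Ω, ℙ) be a probability space, σ : Ω → Ω an ergodic measure-preserving transformation, C : Ω → (0,∞) measurable, and (Λ_n) a sequence of positive reals with Λ_n → ∞. Then for ℙ-almost every ω there exists a set B(ω) ⊂ ℕ of asymptotic density zero such that C(σⁿω) ≤ Λ_n for all n ∉ B(ω). -/
open MeasureTheory Filter Topology
open scoped Classical


lemma limsup_shift (u : ℕ → ℝ) :
    Filter.limsup (fun n => u (n + 1)) atTop = Filter.limsup u atTop := by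
  have h : (fun n : ℕ => u (n + 1)) = u ∘ (fun n => n + 1) := rfl
  rw [h, Filter.limsup, Filter.limsup, ← Filter.map_map, Filter.map_add_atTop_eq_nat]

lemma limsup_le_limsup_of_le_add (u v : ℕ → ℝ)
    (hu0 : ∀ n, 0 ≤ u n) (hv0 : ∀ n, 0 ≤ v n) (hv1 : ∀ n, v n ≤ 1)
    (h : ∀ ε : ℝ, 0 < ε → ∀ᶠ n in atTop, u n ≤ v n + ε) :
    Filter.limsup u atTop ≤ Filter.limsup v atTop := by
  refine le_of_forall_pos_le_add fun ε hε => ?_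
  have hvb : Filter.IsBoundedUnder (· ≤ ·) atTop v := Filter.isBoundedUnder_of ⟨1, hv1⟩
  have hvc : Filter.IsCoboundedUnder (· ≤ ·) atTop v :=
    Filter.isCoboundedUnder_le_of_le atTop hv0
  calc Filter.limsup u atTop
      ≤ Filter.limsup (fun n => v n + ε) atTop := by
        refine Filter.limsup_le_limsup (h ε hε) ?_ ?_
        · exact Filter.isCoboundedUnder_le_of_le atTop hu0
        · exact Filter.isBoundedUnder_of ⟨1 + ε, fun n => by linarith [hv1 n]⟩
    _ = Filter.limsup v atTop + ε := limsup_add_const atTop v ε hvb hvc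

set_option maxHeartbeats 1000000 in
theorem birkhoff_limsup_le {Ω : Type*} [MeasurableSpace Ω] (ℙ : Measure Ω)
    [IsProbabilityMeasure ℙ] (σ : Ω → Ω) (hσ : Ergodic σ ℙ)
    (f : Ω → ℝ) (hf : Measurable f) (h0 : ∀ x, 0 ≤ f x) (h1 : ∀ x, f x ≤ 1) :
    ∀ᵐ ω ∂ℙ, Filter.limsup (fun N => birkhoffSum σ f N ω / N) atTop ≤ ∫ x, f x ∂ℙ := by
  have hσm : Measurable σ := hσ.toMeasurePreserving.measurable
  have hbsmeas : ∀ g : Ω → ℝ, Measurable g → ∀ n : ℕ, Measurable (fun ω => birkhoffSum σ g n ω) :=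
    fun g hg n => Finset.measurable_sum _ fun k _ => hg.comp (hσm.iterate k)
  set A : ℕ → Ω → ℝ := fun N ω => birkhoffSum σ f N ω / N with hA
  have hAmeas : ∀ N, Measurable (A N) := fun N => (hbsmeas f hf N).div_const _
  have hbs0 : ∀ N ω, 0 ≤ birkhoffSum σ f N ω := fun N ω => Finset.sum_nonneg fun k _ => h0 _
  have hbs1 : ∀ N ω, birkhoffSum σ f N ω ≤ N := fun N ω => by
    calc birkhoffSum σ f N ω ≤ ∑ _k ∈ Finset.range N, (1:ℝ) :=
          Finset.sum_le_sum fun k _ => h1 _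
      _ = N := by simp
  have hA0 : ∀ N ω, 0 ≤ A N ω := fun N ω => div_nonneg (hbs0 N ω) (Nat.cast_nonneg N)
  have hA1 : ∀ N ω, A N ω ≤ 1 := by
    intro N ω
    rcases Nat.eq_zero_or_pos N with h | h
    · simp [hA, h]
    · rw [hA, div_le_one (by exact_mod_cast h)]
      exact hbs1 N ω
  set F : Ω → ℝ := fun ω => Filter.limsup (fun N => A N ω) atTop with hFdef
  have hFmeas : Measurable F := Measurable.limsup hAmeas
  -- invariance of F under σ
  have hFinv : ∀ ω, F (σ ω) = F ω := by
    intro ω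
    have key : ∀ N : ℕ, 1 ≤ N →
        A N (σ ω) ≤ A (N + 1) ω + 2 / N ∧ A (N + 1) ω ≤ A N (σ ω) + 2 / N := by
      intro N hN
      have hN0 : (0:ℝ) < N := by exact_mod_cast hN
      have hN1 : (0:ℝ) < (N:ℝ) + 1 := by positivity
      have hb : birkhoffSum σ f (N + 1) ω = f ω + birkhoffSum σ f N (σ ω) :=
        birkhoffSum_succ' σ f N ω
      have ha0 := hbs0 N (σ ω)
      have haN := hbs1 N (σ ω)
      have hf0 := h0 ω
      have hf1 := h1 ω
      have hmul1 : birkhoffSum σ f N (σ ω) * N ≤ (N:ℝ) * N :=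
        mul_le_mul_of_nonneg_right haN hN0.le
      have hmul2 : f ω * N ≤ 1 * N := mul_le_mul_of_nonneg_right hf1 hN0.le
      constructor
      · simp only [hA]
        push_cast
        rw [hb, div_add_div _ _ (ne_of_gt hN1) (ne_of_gt hN0),
          div_le_div_iff₀ hN0 (by positivity)]
        nlinarith [hmul1, ha0, hf0, hN0]
      · simp only [hA]
        push_cast
        rw [hb, ← add_div, div_le_div_iff₀ hN1 hN0]
        nlinarith [hmul2, ha0, hN0]
    have h2N : ∀ ε : ℝ, 0 < ε → ∀ᶠ N : ℕ in atTop, (2:ℝ) / N < ε := fun ε hε =>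
      (tendsto_const_div_atTop_nhds_zero_nat 2).eventually (gt_mem_nhds hε)
    have e1 : Filter.limsup (fun N => A N (σ ω)) atTop ≤
        Filter.limsup (fun N => A (N + 1) ω) atTop := by
      refine limsup_le_limsup_of_le_add (fun N => A N (σ ω)) (fun N => A (N + 1) ω)
        (fun N => hA0 _ _) (fun N => hA0 _ _) (fun N => hA1 _ _) ?_
      intro ε hε
      filter_upwards [h2N ε hε, eventually_ge_atTop 1] with N h2 h1'
      exact (key N h1').1.trans (by linarith)
    have e2 : Filter.limsup (fun N => A (N + 1) ω) atTop ≤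
        Filter.limsup (fun N => A N (σ ω)) atTop := by
      refine limsup_le_limsup_of_le_add (fun N => A (N + 1) ω) (fun N => A N (σ ω))
        (fun N => hA0 _ _) (fun N => hA0 _ _) (fun N => hA1 _ _) ?_
      intro ε hε
      filter_upwards [h2N ε hε, eventually_ge_atTop 1] with N h2 h1'
      exact (key N h1').2.trans (by linarith)
    have e3 : Filter.limsup (fun N => A (N + 1) ω) atTop =
        Filter.limsup (fun N => A N ω) atTop := limsup_shift (fun N => A N ω)
    simp only [hFdef]
    exact le_antisymm (e1.trans_eq e3) (e3 ▸ e2)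
  -- F is a.e. constant
  obtain ⟨u, hu⟩ := hσ.ae_eq_const_of_ae_eq_comp₀ hFmeas.nullMeasurable
      (Filter.Eventually.of_forall fun ω => hFinv ω)
  have hane : (MeasureTheory.ae ℙ).NeBot := ae_neBot.2 (IsProbabilityMeasure.ne_zero ℙ)
  have hu1 : u ≤ 1 := by
    obtain ⟨ω₀, hω₀⟩ := hu.exists
    have : F ω₀ ≤ 1 :=
      Filter.limsup_le_of_le (Filter.isCoboundedUnder_le_of_le atTop fun N => hA0 N ω₀)
        (Filter.Eventually.of_forall fun N => hA1 N ω₀)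
    rw [hω₀] at this
    exact this
  suffices hle : u ≤ ∫ x, f x ∂ℙ by
    filter_upwards [hu] with ω hω
    calc Filter.limsup (fun N => birkhoffSum σ f N ω / N) atTop = F ω := rfl
      _ = u := hω
      _ ≤ _ := hle
  refine le_of_forall_pos_le_add fun ε hε => ?_
  set c : ℝ := u - ε / 2 with hc
  by_cases hcpos : c ≤ 0
  · have h3 : 0 ≤ ∫ x, f x ∂ℙ := integral_nonneg h0
    simp only [hc] at hcpos
    linarith
  push_neg at hcpos
  have hc1 : c ≤ 1 := by simp only [hc]; linarith
  set D : ℕ → Set Ω := fun M => {ω | ∀ n : ℕ, 1 ≤ n → n ≤ M → birkhoffSum σ f n ω < c * n}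
    with hD
  have hDmeas : ∀ M, MeasurableSet (D M) := by
    intro M
    have hEq : D M = ⋂ (n : ℕ), ⋂ (_ : 1 ≤ n), ⋂ (_ : n ≤ M),
        {ω | birkhoffSum σ f n ω < c * n} := by
      ext ω; simp [hD, Set.mem_iInter]
    rw [hEq]
    exact MeasurableSet.iInter fun n => MeasurableSet.iInter fun _ =>
      MeasurableSet.iInter fun _ => measurableSet_lt (hbsmeas f hf n) measurable_const
  have hDanti : Antitone D := fun M M' hMM' ω hω n h1n hnM => hω n h1n (hnM.trans hMM')
  have hGinv : ∀ n (ω : Ω), F ω = u → F (σ^[n] ω) = u := by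
    intro n
    induction n with
    | zero => intro ω h; simpa using h
    | succ k ih =>
      intro ω h
      rw [Function.iterate_succ_apply', hFinv]
      exact ih ω h
  have hsubset : (⋂ M, D M) ⊆ {ω | ¬ F ω = u} := by
    intro ω hω hFω
    have hcool : c < Filter.limsup (fun N => A N ω) atTop := by
      have : Filter.limsup (fun N => A N ω) atTop = u := hFω
      rw [this]; simp only [hc]; linarith
    have hfreq : ∃ᶠ N in atTop, c < A N ω :=
      Filter.frequently_lt_of_lt_limsup
        (Filter.isCoboundedUnder_le_of_le atTop fun N => hA0 N ω) hcool
    obtain ⟨N, hNlt, hN1⟩ := (hfreq.and_eventually (eventually_ge_atTop 1)).exists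
    have hNR : (0:ℝ) < N := by exact_mod_cast hN1
    have hgt : c * N < birkhoffSum σ f N ω := by
      have h' : c < birkhoffSum σ f N ω / N := hNlt
      rwa [lt_div_iff₀ hNR] at h'
    exact absurd (Set.mem_iInter.1 hω N N hN1 le_rfl) (not_lt.2 hgt.le)
  have hDzero : Filter.Tendsto (fun M => ℙ (D M)) atTop (𝓝 0) := by
    have h0' : ℙ (⋂ M, D M) = 0 := by
      refine measure_mono_null hsubset ?_
      simpa using (MeasureTheory.ae_iff.1 hu)
    have h := tendsto_measure_iInter_atTop (fun M => (hDmeas M).nullMeasurableSet) hDanti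
      ⟨0, measure_ne_top ℙ _⟩
    rw [h0'] at h
    exact h
  obtain ⟨M₀, hM₀⟩ : ∃ M₀ : ℕ, ℙ (D M₀) < ENNReal.ofReal (ε / 2) := by
    have hpos : (0 : ENNReal) < ENNReal.ofReal (ε / 2) := ENNReal.ofReal_pos.2 (by linarith)
    exact (hDzero.eventually (Iio_mem_nhds hpos)).exists
  set g : Ω → ℝ := fun ω => f ω + (D M₀).indicator 1 ω with hg
  have hgmeas : Measurable g := hf.add (measurable_one.indicator (hDmeas M₀))
  have hind_nonneg : ∀ ω : Ω, 0 ≤ (D M₀).indicator (1 : Ω → ℝ) ω := fun ω => by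
    by_cases h : ω ∈ D M₀ <;> simp [h]
  have hg0 : ∀ ω, 0 ≤ g ω := fun ω => add_nonneg (h0 ω) (hind_nonneg ω)
  have hg2 : ∀ ω, g ω ≤ 2 := fun ω => by
    have hle : (D M₀).indicator (1 : Ω → ℝ) ω ≤ 1 := by
      by_cases h : ω ∈ D M₀ <;> simp [h]
    have := h1 ω
    simp only [hg]
    linarith
  have hfg : ∀ ω, f ω ≤ g ω := fun ω => le_add_of_nonneg_right (hind_nonneg ω)
  have hbsg0 : ∀ (N : ℕ) ω, 0 ≤ birkhoffSum σ g N ω := fun N ω =>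
    Finset.sum_nonneg fun k _ => hg0 _
  have hbsfg : ∀ (N : ℕ) ω, birkhoffSum σ f N ω ≤ birkhoffSum σ g N ω := fun N ω =>
    Finset.sum_le_sum fun k _ => hfg _
  have hind : ∀ N : ℕ, ∀ ω : Ω, F ω = u → c * ((N:ℝ) - M₀) ≤ birkhoffSum σ g N ω := by
    intro N
    induction N using Nat.strong_induction_on with
    | _ N IH =>
      intro ω hω
      by_cases hNM : N ≤ M₀
      · have hle0 : ((N:ℝ) - M₀) ≤ 0 := by
          have : (N:ℝ) ≤ M₀ := by exact_mod_cast hNM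
          linarith
        calc c * ((N:ℝ) - M₀) ≤ 0 := mul_nonpos_of_nonneg_of_nonpos hcpos.le hle0
          _ ≤ birkhoffSum σ g N ω := hbsg0 N ω
      · push_neg at hNM
        have hstep : ∃ n : ℕ, 1 ≤ n ∧ n ≤ N ∧ c * n ≤ birkhoffSum σ g n ω := by
          by_cases hDmem : ω ∈ D M₀
          · refine ⟨1, le_rfl, by omega, ?_⟩
            have hgω : g ω = f ω + 1 := by simp [hg, hDmem]
            rw [birkhoffSum_one, hgω]
            push_cast
            nlinarith [h0 ω]
          · have hnot : ¬ ∀ n : ℕ, 1 ≤ n → n ≤ M₀ → birkhoffSum σ f n ω < c * n := hDmem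
            push_neg at hnot
            obtain ⟨n, h1n, hnM, hge⟩ := hnot
            exact ⟨n, h1n, by omega, hge.trans (hbsfg n ω)⟩
        obtain ⟨n, h1n, hnN, hkey⟩ := hstep
        have hsplit : birkhoffSum σ g N ω =
            birkhoffSum σ g n ω + birkhoffSum σ g (N - n) (σ^[n] ω) := by
          have h := birkhoffSum_add σ g n (N - n) ω
          rw [Nat.add_sub_cancel' hnN] at h
          exact h
        have hIH : c * (((N - n : ℕ):ℝ) - M₀) ≤ birkhoffSum σ g (N - n) (σ^[n] ω) :=
          IH (N - n) (by omega) (σ^[n] ω) (hGinv n ω hω)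
        have hcast : ((N - n : ℕ):ℝ) = (N:ℝ) - n := by
          push_cast [Nat.cast_sub hnN]
          ring
        rw [hcast] at hIH
        rw [hsplit]
        have hring : c * ((N:ℝ) - M₀) = c * n + c * (((N:ℝ) - n) - M₀) := by ring
        linarith
  have hgint : ∀ k : ℕ, Integrable (fun ω => g (σ^[k] ω)) ℙ := by
    intro k
    refine Integrable.mono' (integrable_const 2)
      ((hgmeas.comp (hσm.iterate k)).aestronglyMeasurable)
      (Filter.Eventually.of_forall fun ω => ?_)
    rw [Real.norm_eq_abs, abs_le]
    exact ⟨by linarith [hg0 (σ^[k] ω)], hg2 _⟩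
  have hintcomp : ∀ k : ℕ, ∫ ω, g (σ^[k] ω) ∂ℙ = ∫ x, g x ∂ℙ := by
    intro k
    have hmp : MeasurePreserving (σ^[k]) ℙ ℙ := hσ.toMeasurePreserving.iterate k
    have hsm : AEStronglyMeasurable g (Measure.map (σ^[k]) ℙ) := by
      rw [hmp.map_eq]; exact hgmeas.aestronglyMeasurable
    rw [← MeasureTheory.integral_map (hσm.iterate k).aemeasurable hsm, hmp.map_eq]
  have hbsint : ∀ N : ℕ, Integrable (fun ω => birkhoffSum σ g N ω) ℙ := by
    intro N
    have hEq : (fun ω => birkhoffSum σ g N ω) = fun ω => ∑ k ∈ Finset.range N, g (σ^[k] ω) :=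
      rfl
    rw [hEq]
    exact integrable_finset_sum _ fun k _ => hgint k
  have hbsI : ∀ N : ℕ, ∫ ω, birkhoffSum σ g N ω ∂ℙ = N * ∫ x, g x ∂ℙ := by
    intro N
    calc ∫ ω, birkhoffSum σ g N ω ∂ℙ = ∑ k ∈ Finset.range N, ∫ ω, g (σ^[k] ω) ∂ℙ :=
          integral_finset_sum _ fun k _ => hgint k
      _ = N * ∫ x, g x ∂ℙ := by
          simp [hintcomp, Finset.sum_const, nsmul_eq_mul]
  have hfint : Integrable f ℙ := by
    refine Integrable.mono' (integrable_const 1) hf.aestronglyMeasurable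
      (Filter.Eventually.of_forall fun ω => ?_)
    rw [Real.norm_eq_abs, abs_le]
    exact ⟨by linarith [h0 ω], h1 ω⟩
  have hgI : ∫ x, g x ∂ℙ ≤ (∫ x, f x ∂ℙ) + ε / 2 := by
    have hindint : Integrable ((D M₀).indicator (1 : Ω → ℝ)) ℙ :=
      (integrable_const 1).indicator (hDmeas M₀)
    have hEq : ∫ x, g x ∂ℙ = (∫ x, f x ∂ℙ) + ∫ x, (D M₀).indicator 1 x ∂ℙ :=
      integral_add hfint hindint
    rw [hEq, integral_indicator_one (hDmeas M₀), measureReal_def]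
    have : (ℙ (D M₀)).toReal ≤ ε / 2 := ENNReal.toReal_le_of_le_ofReal (by linarith) hM₀.le
    linarith
  have hmain : ∀ N : ℕ, c * ((N:ℝ) - M₀) ≤ N * ((∫ x, f x ∂ℙ) + ε / 2) := by
    intro N
    have hae : ∀ᵐ ω ∂ℙ, c * ((N:ℝ) - M₀) ≤ birkhoffSum σ g N ω := by
      filter_upwards [hu] with ω hω
      exact hind N ω hω
    have h1' : c * ((N:ℝ) - M₀) ≤ ∫ ω, birkhoffSum σ g N ω ∂ℙ := by
      have h := integral_mono_ae (integrable_const _) (hbsint N) hae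
      simpa using h
    have h2' := hbsI N
    have hN0 : (0:ℝ) ≤ N := Nat.cast_nonneg N
    calc c * ((N:ℝ) - M₀) ≤ ∫ ω, birkhoffSum σ g N ω ∂ℙ := h1'
      _ = N * ∫ x, g x ∂ℙ := h2'
      _ ≤ N * ((∫ x, f x ∂ℙ) + ε / 2) := mul_le_mul_of_nonneg_left hgI hN0
  by_contra hcon
  push_neg at hcon
  have hcK : (∫ x, f x ∂ℙ) + ε / 2 < c := by simp only [hc]; linarith
  set K : ℝ := (∫ x, f x ∂ℙ) + ε / 2 with hK
  have hckpos : 0 < c - K := by linarith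
  obtain ⟨N, hN⟩ := exists_nat_gt (c * M₀ / (c - K))
  rw [div_lt_iff₀ hckpos] at hN
  have h := hmain N
  nlinarith [h, hN]


/-- A set `B ⊆ ℕ` has asymptotic density zero. -/
def densityZero (B : Set ℕ) : Prop :=
  Tendsto (fun N : ℕ => (((Finset.range (N + 1)).filter (fun n => n ∈ B)).card : ℝ) / N)
    atTop (𝓝 0)

/-- For an ergodic base, a positive measurable `C` and thresholds `Λ n → ∞`, almost every
`ω` admits a density-zero bad set `B(ω)` outside of which `C(σⁿω) ≤ Λ n`. -/
theorem stmt2 {Ω : Type*} [MeasurableSpace Ω] (ℙ : Measure Ω) [IsProbabilityMeasure ℙ]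
    (σ : Ω → Ω) (hσ : Ergodic σ ℙ)
    (C : Ω → ℝ) (hCpos : ∀ ω, 0 < C ω) (hCmeas : Measurable C)
    (Λ : ℕ → ℝ) (hΛpos : ∀ n, 0 < Λ n) (hΛ : Tendsto Λ atTop atTop) :
    ∀ᵐ ω ∂ℙ, ∃ B : Set ℕ, densityZero B ∧ ∀ n : ℕ, n ∉ B → C (σ^[n] ω) ≤ Λ n := by
  have hσm : Measurable σ := hσ.toMeasurePreserving.measurable
  set s : ℕ → Set Ω := fun k => {ω | (k:ℝ) < C ω} with hs
  have hsmeas : ∀ k, MeasurableSet (s k) := fun k => measurableSet_lt measurable_const hCmeas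
  set f : ℕ → Ω → ℝ := fun k => (s k).indicator 1 with hfdef
  have hf0 : ∀ k x, 0 ≤ f k x := fun k x => by
    by_cases h : x ∈ s k <;> simp [hfdef, h]
  have hf1 : ∀ k x, f k x ≤ 1 := fun k x => by
    by_cases h : x ∈ s k <;> simp [hfdef, h]
  have hfmeas : ∀ k, Measurable (f k) := fun k => measurable_one.indicator (hsmeas k)
  have hbs0 : ∀ k (N : ℕ) ω, 0 ≤ birkhoffSum σ (f k) N ω := fun k N ω =>
    Finset.sum_nonneg fun i _ => hf0 k _
  have hae : ∀ᵐ ω ∂ℙ, ∀ k : ℕ,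
      Filter.limsup (fun N => birkhoffSum σ (f k) N ω / N) atTop ≤ (ℙ (s k)).toReal := by
    rw [MeasureTheory.ae_all_iff]
    intro k
    have h := birkhoff_limsup_le ℙ σ hσ (f k) (hfmeas k) (hf0 k) (hf1 k)
    have hint : ∫ x, f k x ∂ℙ = (ℙ (s k)).toReal := integral_indicator_one (hsmeas k)
    rw [hint] at h
    exact h
  have hanti : Antitone s := by
    intro k l hkl ω hω
    exact lt_of_le_of_lt (show (k:ℝ) ≤ (l:ℝ) from by exact_mod_cast hkl) hω
  have hiInter : (⋂ k, s k) = ∅ := by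
    ext ω
    simp only [Set.mem_iInter, Set.mem_empty_iff_false, iff_false, not_forall]
    obtain ⟨k, hk⟩ := exists_nat_gt (C ω)
    exact ⟨k, fun h => absurd h (not_lt.2 hk.le)⟩
  have hmeas_tend : Tendsto (fun k => (ℙ (s k)).toReal) atTop (𝓝 0) := by
    have h := tendsto_measure_iInter_atTop (fun k => (hsmeas k).nullMeasurableSet) hanti
      ⟨0, measure_ne_top ℙ _⟩
    rw [hiInter, measure_empty] at h
    have h2 := (ENNReal.tendsto_toReal (by simp : (0 : ENNReal) ≠ ⊤)).comp h
    simpa [Function.comp_def] using h2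
  filter_upwards [hae] with ω hω
  refine ⟨{n : ℕ | ¬ C (σ^[n] ω) ≤ Λ n}, ?_, fun n hn => not_not.mp hn⟩
  rw [densityZero, tendsto_order]
  constructor
  · intro a ha
    filter_upwards with N
    exact lt_of_lt_of_le ha (div_nonneg (Nat.cast_nonneg _) (Nat.cast_nonneg _))
  · intro a ha
    obtain ⟨k, hk⟩ : ∃ k : ℕ, (ℙ (s k)).toReal < a / 4 :=
      (hmeas_tend.eventually (Iio_mem_nhds (by linarith))).exists
    obtain ⟨n₀, hn₀⟩ := eventually_atTop.1 (hΛ.eventually_ge_atTop (k:ℝ))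
    have hlim : ∀ᶠ N : ℕ in atTop, birkhoffSum σ (f k) N ω / N < a / 3 := by
      refine eventually_lt_of_limsup_lt (lt_of_le_of_lt (hω k) (by linarith)) ?_
      refine Filter.isBoundedUnder_of ⟨1, fun N => ?_⟩
      rcases Nat.eq_zero_or_pos N with h | h
      · simp [h]
      · rw [div_le_one (by exact_mod_cast h)]
        calc birkhoffSum σ (f k) N ω ≤ ∑ _i ∈ Finset.range N, (1:ℝ) :=
              Finset.sum_le_sum fun i _ => hf1 k _
          _ = N := by simp
    obtain ⟨N₁, hN₁⟩ := eventually_atTop.1 hlim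
    have hconst : ∀ᶠ N : ℕ in atTop, (n₀:ℝ) / N < a / 3 :=
      (tendsto_const_div_atTop_nhds_zero_nat (n₀:ℝ)).eventually (gt_mem_nhds (by linarith))
    filter_upwards [eventually_ge_atTop N₁, eventually_ge_atTop 1, hconst] with N hNN₁ hN1 hn0N
    have hNpos : (0:ℝ) < N := by exact_mod_cast hN1
    rw [div_lt_iff₀ hNpos]
    -- card bound
    have hsub : (Finset.range (N + 1)).filter (fun n => n ∈ {n : ℕ | ¬ C (σ^[n] ω) ≤ Λ n}) ⊆
        Finset.range n₀ ∪ (Finset.range (N + 1)).filter (fun n => σ^[n] ω ∈ s k) := by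
      intro n hn
      simp only [Finset.mem_filter, Finset.mem_range, Set.mem_setOf_eq] at hn
      rcases lt_or_ge n n₀ with h | h
      · exact Finset.mem_union_left _ (Finset.mem_range.2 h)
      · refine Finset.mem_union_right _ (Finset.mem_filter.2 ⟨Finset.mem_range.2 hn.1, ?_⟩)
        exact lt_of_le_of_lt (hn₀ n h) (lt_of_not_ge hn.2)
    have hcard1 : ((Finset.range (N + 1)).filter
        (fun n => n ∈ {n : ℕ | ¬ C (σ^[n] ω) ≤ Λ n})).card ≤
        n₀ + ((Finset.range (N + 1)).filter (fun n => σ^[n] ω ∈ s k)).card := by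
      calc _ ≤ (Finset.range n₀ ∪ (Finset.range (N + 1)).filter
            (fun n => σ^[n] ω ∈ s k)).card := Finset.card_le_card hsub
        _ ≤ n₀ + _ := by
            refine (Finset.card_union_le _ _).trans ?_
            simp
    have hcard2 : (((Finset.range (N + 1)).filter (fun n => σ^[n] ω ∈ s k)).card : ℝ) ≤
        birkhoffSum σ (f k) (N + 1) ω := by
      have he : (((Finset.range (N + 1)).filter (fun n => σ^[n] ω ∈ s k)).card : ℝ) =
          ∑ n ∈ (Finset.range (N + 1)).filter (fun n => σ^[n] ω ∈ s k), f k (σ^[n] ω) := by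
        rw [Finset.sum_congr rfl (fun n hn => ?_), Finset.sum_const, nsmul_eq_mul, mul_one]
        have := (Finset.mem_filter.1 hn).2
        simp [hfdef, this]
      rw [he]
      exact Finset.sum_le_sum_of_subset_of_nonneg (Finset.filter_subset _ _)
        (fun i _ _ => hf0 k _)
    have hbsb : birkhoffSum σ (f k) (N + 1) ω < a / 3 * (N + 1) := by
      have h := hN₁ (N + 1) (by omega)
      rw [div_lt_iff₀ (by positivity)] at h
      push_cast at h ⊢
      linarith
    have hn0' : (n₀:ℝ) < a / 3 * N := by
      rwa [div_lt_iff₀ hNpos] at hn0N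
    have hcast : (((Finset.range (N + 1)).filter
        (fun n => n ∈ {n : ℕ | ¬ C (σ^[n] ω) ≤ Λ n})).card : ℝ) ≤
        (n₀ : ℝ) + (((Finset.range (N + 1)).filter (fun n => σ^[n] ω ∈ s k)).card : ℝ) := by
      exact_mod_cast hcard1
    have hN1' : (1:ℝ) ≤ N := by exact_mod_cast hN1
    have hN2 : ((N:ℝ) + 1) ≤ 2 * N := by linarith
    have hprod : a / 3 * ((N:ℝ) + 1) ≤ a / 3 * (2 * N) :=
      mul_le_mul_of_nonneg_left hN2 (by linarith)
    have hfinal : ((Finset.filter (fun n => n ∈ {n : ℕ | ¬C (σ^[n] ω) ≤ Λ n})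
        (Finset.range (N + 1))).card : ℝ) < a * N := by
      calc ((Finset.filter (fun n => n ∈ {n : ℕ | ¬C (σ^[n] ω) ≤ Λ n})
            (Finset.range (N + 1))).card : ℝ)
          ≤ (n₀ : ℝ) + ((Finset.filter (fun n => σ^[n] ω ∈ s k) (Finset.range (N + 1))).card : ℝ) :=
          hcast
        _ ≤ (n₀ : ℝ) + birkhoffSum σ (f k) (N + 1) ω := by linarith [hcard2]
        _ < a / 3 * N + a / 3 * ((N:ℝ) + 1) := by linarith [hn0', hbsb]
        _ ≤ a / 3 * N + a / 3 * (2 * N) := by linarith [hprod]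
        _ = a * N := by ring
    convert hfinal using 4
    · rfl
    · rfl
end
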